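/- Let ξ ∈ 𝔰𝔢_N(3) with rotational block S (the top-left 3×3 skew-symmetric block of ξ) and let θ > 0 be defined by θ² = (1/2)·tr(Sᵀ S). Define β₁ = (4cos θ − 4 + θ sin θ)/(2θ²), β₂ = (4θ − 5 sin θ + θ cos θ)/(2θ³), β₃ = (θ sin θ + 2cos θ − 2)/(2θ⁴), and β₄ = (2θ − 3 sin θ + θ cos θ)/(2θ⁵). Then the right Jacobian dexp(−ξ) admits the closed form: for every η ∈ 𝔰𝔢_N(3), ∑_{i=0}^∞ ((−1)^i/(i+1)!)·ad_ξ^i(η) = η + β₁·ad_ξ(η) + β₂·ad_ξ²(η) + β₃·ad_ξ³(η) + β₄·ad_ξ⁴(η). (Proposition 4, equation for dexp(−ξ) on SE_N(3).) -/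

import Mathlib

/-- The adjoint operator `ad_ξ : η ↦ ξ*η - η*ξ` on `d × d` real matrices. -/
noncomputable def adM {d : ℕ} (x : Matrix (Fin d) (Fin d) ℝ) :
    Module.End ℝ (Matrix (Fin d) (Fin d) ℝ) :=
  LinearMap.mulLeft ℝ x - LinearMap.mulRight ℝ x

/-- Membership in the Lie algebra `𝔰𝔢_N(3)`: a `(3+N) × (3+N)` real matrix whose last
`N` rows vanish and whose top-left `3 × 3` block is skew-symmetric. -/
def mem_seN (N : ℕ) (ξ : Matrix (Fin (3 + N)) (Fin (3 + N)) ℝ) : Prop :=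
  (∀ i j : Fin (3 + N), 3 ≤ (i : ℕ) → ξ i j = 0) ∧
  (∀ i j : Fin (3 + N), (i : ℕ) < 3 → (j : ℕ) < 3 → ξ j i = - ξ i j)

/-- The rotational block `S`: the top-left `3 × 3` block of `ξ`. -/
def rotBlock (N : ℕ) (ξ : Matrix (Fin (3 + N)) (Fin (3 + N)) ℝ) :
    Matrix (Fin 3) (Fin 3) ℝ :=
  ξ.submatrix (Fin.castAdd N) (Fin.castAdd N)

open Matrix

namespace DexpAux

section BlockInfra
variable {N : ℕ}

variable {N : ℕ}

noncomputable def Phi (M : Matrix (Fin (3+N)) (Fin (3+N)) ℝ) :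
    Matrix (Fin 3 ⊕ Fin N) (Fin 3 ⊕ Fin N) ℝ :=
  M.submatrix finSumFinEquiv finSumFinEquiv

lemma Phi_mul (M P : Matrix (Fin (3+N)) (Fin (3+N)) ℝ) : Phi (M * P) = Phi M * Phi P := by
  unfold Phi
  rw [← Matrix.submatrix_mul_equiv M P _ finSumFinEquiv _]

lemma decomp {M : Matrix (Fin (3+N)) (Fin (3+N)) ℝ} (h : mem_seN N M) :
    ∃ T W, (∀ i j, T j i = - T i j) ∧ Phi M = Matrix.fromBlocks T W 0 0 := by
  refine ⟨(Phi M).toBlocks₁₁, (Phi M).toBlocks₁₂, ?_, ?_⟩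
  · intro i j
    simp only [Phi, toBlocks₁₁, Matrix.submatrix_apply, finSumFinEquiv_apply_left,
      Matrix.of_apply]
    exact h.2 _ _ (by simp) (by simp)
  · have h21 : (Phi M).toBlocks₂₁ = 0 := by
      ext i j
      simp only [Phi, toBlocks₂₁, Matrix.submatrix_apply, finSumFinEquiv_apply_right,
        Matrix.of_apply, Matrix.zero_apply]
      exact h.1 _ _ (by simp)
    have h22 : (Phi M).toBlocks₂₂ = 0 := by
      ext i j
      simp only [Phi, toBlocks₂₂, Matrix.submatrix_apply, finSumFinEquiv_apply_right,
        Matrix.of_apply, Matrix.zero_apply]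
      exact h.1 _ _ (by simp)
    rw [← h21, ← h22]
    exact (fromBlocks_toBlocks _).symm

lemma ad_Phi {ξ μ : Matrix (Fin (3+N)) (Fin (3+N)) ℝ}
    {S T : Matrix (Fin 3) (Fin 3) ℝ} {V W : Matrix (Fin 3) (Fin N) ℝ}
    (hξ : Phi ξ = fromBlocks S V 0 0) (hμ : Phi μ = fromBlocks T W 0 0) :
    Phi (adM ξ μ) = fromBlocks (S*T - T*S) (S*W - T*V) 0 0 := by
  have hd : adM ξ μ = ξ * μ - μ * ξ := rfl
  have hsub : Phi (ξ * μ - μ * ξ) = Phi (ξ * μ) - Phi (μ * ξ) := rfl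
  rw [hd, hsub, Phi_mul, Phi_mul, hξ, hμ, fromBlocks_multiply, fromBlocks_multiply]
  simp only [Matrix.mul_zero, Matrix.zero_mul, add_zero, zero_add]
  ext (i | i) (j | j) <;> simp [Matrix.fromBlocks]

lemma rotBlock_eq {ξ : Matrix (Fin (3+N)) (Fin (3+N)) ℝ}
    {S : Matrix (Fin 3) (Fin 3) ℝ} {V : Matrix (Fin 3) (Fin N) ℝ}
    (hξ : Phi ξ = fromBlocks S V 0 0) : rotBlock N ξ = S := by
  ext i j
  have := congrArg (fun X => X (Sum.inl i) (Sum.inl j)) hξ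
  simpa [Phi, rotBlock] using this


lemma Phi_add (M P : Matrix (Fin (3+N)) (Fin (3+N)) ℝ) : Phi (M + P) = Phi M + Phi P := rfl

lemma Phi_smul (c : ℝ) (M : Matrix (Fin (3+N)) (Fin (3+N)) ℝ) : Phi (c • M) = c • Phi M := rfl

lemma Phi_zero : Phi (0 : Matrix (Fin (3+N)) (Fin (3+N)) ℝ) = 0 := rfl

lemma Phi_inj {M P : Matrix (Fin (3+N)) (Fin (3+N)) ℝ} (h : Phi M = Phi P) : M = P := by
  ext i j
  have := congrArg (fun X => X (finSumFinEquiv.symm i) (finSumFinEquiv.symm j)) h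
  simpa [Phi] using this

set_option maxHeartbeats 1000000 in
lemma traceM (a b c : ℝ) :
    ((!![0,a,b;-a,0,c;-b,-c,0] : Matrix (Fin 3) (Fin 3) ℝ)ᵀ
      * !![0,a,b;-a,0,c;-b,-c,0]).trace = 2*(a^2+b^2+c^2) := by
  have ht : (!![0,a,b;-a,0,c;-b,-c,0] : Matrix (Fin 3) (Fin 3) ℝ)ᵀ
      = !![0,-a,-b;a,0,-c;b,c,0] := by
    ext i j
    fin_cases i <;> fin_cases j <;> simp
  rw [ht]
  simp [Matrix.trace_fin_three, Matrix.mul_apply, Fin.sum_univ_three]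
  ring

end BlockInfra


lemma skew_form (S : Matrix (Fin 3) (Fin 3) ℝ) (hs : ∀ i j, S j i = - S i j) :
    S = !![0, S 0 1, S 0 2; -(S 0 1), 0, S 1 2; -(S 0 2), -(S 1 2), 0] := by
  have h00 : S 0 0 = 0 := by have := hs 0 0; linarith
  have h11 : S 1 1 = 0 := by have := hs 1 1; linarith
  have h22 : S 2 2 = 0 := by have := hs 2 2; linarith
  ext i j
  fin_cases i <;> fin_cases j <;>
    simp [h00, h11, h22, hs 0 1, hs 0 2, hs 1 2]

lemma M1 (S : Matrix (Fin 3) (Fin 3) ℝ) (a b c : ℝ)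
    (hS : S = !![0,a,b;-a,0,c;-b,-c,0]) :
    S * S * S = -(a^2 + b^2 + c^2) • S := by
  subst hS
  ext i j
  fin_cases i <;> fin_cases j <;>
    simp [Matrix.mul_apply, Fin.sum_univ_three] <;> ring

set_option maxHeartbeats 1000000 in
lemma M2 (S T : Matrix (Fin 3) (Fin 3) ℝ) (a b c p q r : ℝ)
    (hS : S = !![0,a,b;-a,0,c;-b,-c,0]) (hT : T = !![0,p,q;-p,0,r;-q,-r,0]) :
    S * (S * (S*T - T*S) - (S*T - T*S) * S) - (S * (S*T - T*S) - (S*T - T*S) * S) * S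
      = -(a^2 + b^2 + c^2) • (S*T - T*S) := by
  subst hS; subst hT
  ext i j
  fin_cases i <;> fin_cases j <;>
    simp [Matrix.mul_apply, Fin.sum_univ_three] <;> ring

set_option maxHeartbeats 1000000 in
lemma M3 (S T : Matrix (Fin 3) (Fin 3) ℝ) (a b c p q r : ℝ)
    (hS : S = !![0,a,b;-a,0,c;-b,-c,0]) (hT : T = !![0,p,q;-p,0,r;-q,-r,0]) :
    S * (S * (S * (S*T - T*S) - (S*T - T*S) * S))
      + (a^2+b^2+c^2) • (S * (S*T - T*S) - (S*T - T*S) * S)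
      + (a^2+b^2+c^2) • (S * (S * T)) + ((a^2+b^2+c^2)*(a^2+b^2+c^2)) • T = 0 := by
  subst hS; subst hT
  ext i j
  fin_cases i <;> fin_cases j <;>
    simp [Matrix.mul_apply, Fin.sum_univ_three] <;> ring


section Key
variable {N : ℕ}
lemma key5 (ξ η : Matrix (Fin (3+N)) (Fin (3+N)) ℝ)
    (hξ : mem_seN N ξ) (hη : mem_seN N η) (θ : ℝ)
    (hθ_sq : θ ^ 2 = (1 / 2) * Matrix.trace ((rotBlock N ξ).transpose * rotBlock N ξ)) :
    (adM ξ ^ 5) η + (2*θ^2) • ((adM ξ ^ 3) η) + (θ^2*θ^2) • (adM ξ η) = 0 := by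
  obtain ⟨S, V, hS, hξΦ⟩ := decomp hξ
  obtain ⟨T, W, hT, hηΦ⟩ := decomp hη
  have hSf := skew_form S hS
  have hTf := skew_form T hT
  have hθ' : θ ^ 2 = S 0 1 ^ 2 + S 0 2 ^ 2 + S 1 2 ^ 2 := by
    rw [hθ_sq, rotBlock_eq hξΦ]
    conv_lhs => rw [hSf]
    rw [traceM]
    ring
  set c := θ ^ 2 with hc
  have hA : S * S * S = -c • S := by rw [hθ']; exact M1 S _ _ _ hSf
  have hB : S * (S * (S*T - T*S) - (S*T - T*S) * S) - (S * (S*T - T*S) - (S*T - T*S) * S) * S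
      = -c • (S*T - T*S) := by rw [hθ']; exact M2 S T _ _ _ _ _ _ hSf hTf
  have hC : S * (S * (S * (S*T - T*S) - (S*T - T*S) * S))
      + c • (S * (S*T - T*S) - (S*T - T*S) * S)
      + c • (S * (S * T)) + (c*c) • T = 0 := by
    rw [hθ']; exact M3 S T _ _ _ _ _ _ hSf hTf
  have hA' : ∀ (X : Matrix (Fin 3) (Fin N) ℝ), S*(S*(S*X)) = -c • (S*X) := by
    intro X
    calc S*(S*(S*X)) = (S*S*S)*X := by simp [Matrix.mul_assoc]
    _ = -c • (S*X) := by rw [hA, Matrix.smul_mul]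
  set T1 := S*T - T*S with hT1d
  set W1 := S*W - T*V with hW1d
  set T2 := S*T1 - T1*S with hT2d
  set W2 := S*W1 - T1*V with hW2d
  set T3 := S*T2 - T2*S with hT3d
  set W3 := S*W2 - T2*V with hW3d
  set T4 := S*T3 - T3*S with hT4d
  set W4 := S*W3 - T3*V with hW4d
  set T5 := S*T4 - T4*S with hT5d
  set W5 := S*W4 - T4*V with hW5d
  have h1 : Phi (adM ξ η) = fromBlocks T1 W1 0 0 := ad_Phi hξΦ hηΦ
  have h2 : Phi (adM ξ (adM ξ η)) = fromBlocks T2 W2 0 0 := ad_Phi hξΦ h1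
  have h3 : Phi (adM ξ (adM ξ (adM ξ η))) = fromBlocks T3 W3 0 0 := ad_Phi hξΦ h2
  have h4 : Phi (adM ξ (adM ξ (adM ξ (adM ξ η)))) = fromBlocks T4 W4 0 0 := ad_Phi hξΦ h3
  have h5 : Phi (adM ξ (adM ξ (adM ξ (adM ξ (adM ξ η))))) = fromBlocks T5 W5 0 0 :=
    ad_Phi hξΦ h4
  have hT3e : T3 = -c • T1 := hB
  have hT4e : T4 = -c • T2 := by
    rw [hT4d, hT3e, Matrix.smul_mul, Matrix.mul_smul, ← smul_sub, hT2d]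
  have hT5e : T5 = (c*c) • T1 := by
    rw [hT5d, hT4e, Matrix.smul_mul, Matrix.mul_smul, ← smul_sub, ← hT3d, hT3e]
    module
  have hTsum : T5 + (2*c) • T3 + (c*c) • T1 = 0 := by
    rw [hT5e, hT3e]; module
  have hCV : S*(S*(T2*V)) + c • (T2*V) + c • (S*(S*(T*V))) + (c*c) • (T*V) = 0 := by
    have h := congrArg (· * V) hC
    simp only [Matrix.add_mul, Matrix.smul_mul, Matrix.zero_mul, Matrix.mul_assoc] at h
    exact h
  have hW4e : W4 = S*W3 + c • (T1*V) := by
    rw [hW4d, hT3e, Matrix.smul_mul]; module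
  have hW5e : W5 = S*(S*W3) + c • (S*(T1*V)) + c • (T2*V) := by
    rw [hW5d, hW4e, hT4e, Matrix.mul_add, Matrix.mul_smul, Matrix.smul_mul]; module
  have hW3e : W3 = S*(S*W1) - S*(T1*V) - T2*V := by
    rw [hW3d, hW2d, Matrix.mul_sub]
  have hSSW3 : S*(S*W3) = -c • (S*(S*W1)) + c • (S*(T1*V)) - S*(S*(T2*V)) := by
    rw [hW3e]
    simp only [Matrix.mul_sub]
    rw [hA' W1, hA' (T1*V), Matrix.mul_smul]
    module
  have hSSW1 : S*(S*W1) = S*(S*(S*W)) - S*(S*(T*V)) := by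
    rw [hW1d]; simp only [Matrix.mul_sub]
  have hWsum : W5 + (2*c) • W3 + (c*c) • W1 = 0 := by
    have expand : W5 + (2*c) • W3 + (c*c) • W1
        = -(S*(S*(T2*V)) + c • (T2*V) + c • (S*(S*(T*V))) + (c*c) • (T*V))
          + c • (S*(S*(S*W))) + (c*c) • (S*W) := by
      rw [hW5e, hSSW3, hW3e, hSSW1]
      rw [hW1d]
      module
    rw [expand, hCV, hA' W]
    module
  have hpow5 : (adM ξ ^ 5) η = adM ξ (adM ξ (adM ξ (adM ξ (adM ξ η)))) := by
    simp [pow_succ, Module.End.mul_apply]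
  have hpow3 : (adM ξ ^ 3) η = adM ξ (adM ξ (adM ξ η)) := by
    simp [pow_succ, Module.End.mul_apply]
  rw [hpow5, hpow3]
  apply Phi_inj
  rw [Phi_add, Phi_add, Phi_smul, Phi_smul, Phi_zero, h5, h3, h1,
    Matrix.fromBlocks_smul, Matrix.fromBlocks_smul, Matrix.fromBlocks_add,
    Matrix.fromBlocks_add, hTsum, hWsum]
  simp

end Key


lemma factR (n : ℕ) : ((n+1).factorial : ℝ) = (n+1) * (n.factorial : ℝ) := by
  push_cast [Nat.factorial_succ]; ring

lemma factne (n : ℕ) : ((n.factorial : ℝ)) ≠ 0 :=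
  Nat.cast_ne_zero.2 (Nat.factorial_ne_zero _)

variable {θ : ℝ}

lemma H1 (hθ : θ ≠ 0) : HasSum (fun k : ℕ => (-1:ℝ)^k * θ^(2*k) / ((2*k+1).factorial : ℝ))
    (Real.sin θ / θ) := by
  have h := (Real.hasSum_sin θ).div_const θ
  have e : ∀ k : ℕ, (-1:ℝ)^k * θ^(2*k+1) / ((2*k+1).factorial : ℝ) / θ
      = (-1:ℝ)^k * θ^(2*k) / ((2*k+1).factorial : ℝ) := by
    intro k
    rw [pow_succ]
    have := factne (2*k+1)
    field_simp
  simpa only [e] using h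

lemma H2 (hθ : θ ≠ 0) : HasSum (fun k : ℕ => (-1:ℝ)^k * θ^(2*k) / ((2*k+2).factorial : ℝ))
    ((1 - Real.cos θ) / θ^2) := by
  set f : ℕ → ℝ := fun n => (-1:ℝ)^n * θ^(2*n) / ((2*n).factorial : ℝ) with hf
  have h0 : HasSum (fun n : ℕ => f (n+1)) (Real.cos θ - 1) := by
    rw [hasSum_nat_add_iff 1]
    simpa [hf] using Real.hasSum_cos θ
  have h := h0.div_const (-θ^2)
  have e : ∀ k : ℕ, f (k+1) / (-θ^2)
      = (-1:ℝ)^k * θ^(2*k) / ((2*k+2).factorial : ℝ) := by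
    intro k
    simp only [hf]
    rw [show 2*(k+1) = 2*k+2 by ring, pow_succ, pow_succ, pow_succ]
    have := factne (2*k+2)
    field_simp
  rw [show (Real.cos θ - 1) / (-θ^2) = (1 - Real.cos θ)/θ^2 by
    rw [div_neg]; ring_nf] at h
  simpa only [e] using h

lemma H3 (hθ : θ ≠ 0) : HasSum (fun k : ℕ => (-1:ℝ)^k * θ^(2*k) / ((2*k+3).factorial : ℝ))
    ((θ - Real.sin θ) / θ^3) := by
  set f : ℕ → ℝ := fun n => (-1:ℝ)^n * θ^(2*n+1) / ((2*n+1).factorial : ℝ) with hf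
  have h0 : HasSum (fun n : ℕ => f (n+1)) (Real.sin θ - θ) := by
    rw [hasSum_nat_add_iff 1]
    simpa [hf] using Real.hasSum_sin θ
  have h := h0.div_const (-θ^3)
  have e : ∀ k : ℕ, f (k+1) / (-θ^3)
      = (-1:ℝ)^k * θ^(2*k) / ((2*k+3).factorial : ℝ) := by
    intro k
    simp only [hf]
    rw [show 2*(k+1)+1 = 2*k+3 by ring, pow_succ, pow_succ, pow_succ]
    have := factne (2*k+3)
    field_simp
    ring
  rw [show (Real.sin θ - θ) / (-θ^3) = (θ - Real.sin θ)/θ^3 by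
    rw [div_neg]; ring_nf] at h
  simpa only [e] using h



variable {θ : ℝ}

lemma negsq (θ : ℝ) (k : ℕ) : ((-θ^2 : ℝ))^k = (-1)^k * θ^(2*k) := by
  rw [← neg_one_mul, mul_pow, pow_mul]

lemma sigma1 (hθ : θ ≠ 0) :
    HasSum (fun k : ℕ => ((-1:ℝ)^(2*k+1) / (((2*k+1)+1).factorial : ℝ))
        * ((1-(k:ℝ))*(-θ^2)^k))
      ((4*Real.cos θ - 4 + θ*Real.sin θ)/(2*θ^2)) := by
  have h := ((H1 hθ).mul_left (1/2)).sub ((H2 hθ).mul_left 2)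
  have efun : ∀ k : ℕ, (1/2) * ((-1:ℝ)^k * θ^(2*k) / ((2*k+1).factorial : ℝ))
      - 2 * ((-1:ℝ)^k * θ^(2*k) / ((2*k+2).factorial : ℝ))
      = ((-1:ℝ)^(2*k+1) / (((2*k+1)+1).factorial : ℝ)) * ((1-(k:ℝ))*(-θ^2)^k) := by
    intro k
    rw [factR (2*k+1), negsq, Odd.neg_one_pow (n := 2*k+1) ⟨k, by ring⟩]
    have := factne (2*k+1)
    field_simp
    push_cast; ring
  have eval : (1/2) * (Real.sin θ / θ) - 2 * ((1 - Real.cos θ)/θ^2)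
      = (4*Real.cos θ - 4 + θ*Real.sin θ)/(2*θ^2) := by
    field_simp
    ring
  rw [← eval]
  simpa only [efun] using h

lemma sigma2 (hθ : θ ≠ 0) :
    HasSum (fun k : ℕ => ((-1:ℝ)^(2*k+2) / (((2*k+2)+1).factorial : ℝ))
        * ((1-(k:ℝ))*(-θ^2)^k))
      ((4*θ - 5*Real.sin θ + θ*Real.cos θ)/(2*θ^3)) := by
  have h := ((H3 hθ).mul_left (5/2)).sub ((H2 hθ).mul_left (1/2))
  have efun : ∀ k : ℕ, (5/2) * ((-1:ℝ)^k * θ^(2*k) / ((2*k+3).factorial : ℝ))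
      - (1/2) * ((-1:ℝ)^k * θ^(2*k) / ((2*k+2).factorial : ℝ))
      = ((-1:ℝ)^(2*k+2) / (((2*k+2)+1).factorial : ℝ)) * ((1-(k:ℝ))*(-θ^2)^k) := by
    intro k
    rw [factR (2*k+2), factR (2*k+1), negsq, Even.neg_one_pow (n := 2*k+2) ⟨k+1, by ring⟩]
    have := factne (2*k+1)
    field_simp
    push_cast; ring
  have eval : (5/2) * ((θ - Real.sin θ)/θ^3) - (1/2) * ((1 - Real.cos θ)/θ^2)
      = (4*θ - 5*Real.sin θ + θ*Real.cos θ)/(2*θ^3) := by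
    field_simp
    ring
  rw [← eval]
  simpa only [efun] using h

lemma sigma3 (hθ : θ ≠ 0) :
    HasSum (fun k : ℕ => ((-1:ℝ)^(2*k+1) / (((2*k+1)+1).factorial : ℝ))
        * ((k:ℝ)*(-θ^2)^(k-1)))
      ((θ*Real.sin θ + 2*Real.cos θ - 2)/(2*θ^4)) := by
  have h := ((H1 hθ).mul_left (1/(2*θ^2))).sub ((H2 hθ).mul_left (1/θ^2))
  have efun : ∀ k : ℕ, (1/(2*θ^2)) * ((-1:ℝ)^k * θ^(2*k) / ((2*k+1).factorial : ℝ))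
      - (1/θ^2) * ((-1:ℝ)^k * θ^(2*k) / ((2*k+2).factorial : ℝ))
      = ((-1:ℝ)^(2*k+1) / (((2*k+1)+1).factorial : ℝ)) * ((k:ℝ)*(-θ^2)^(k-1)) := by
    intro k
    rw [factR (2*k+1), Odd.neg_one_pow (n := 2*k+1) ⟨k, by ring⟩]
    cases k with
    | zero => norm_num <;> ring
    | succ m =>
      rw [show m+1-1 = m from rfl, negsq]
      have := factne (2*(m+1)+1)
      push_cast
      field_simp
      ring
  have eval : (1/(2*θ^2)) * (Real.sin θ / θ) - (1/θ^2) * ((1 - Real.cos θ)/θ^2)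
      = (θ*Real.sin θ + 2*Real.cos θ - 2)/(2*θ^4) := by
    field_simp
    ring
  rw [← eval]
  simpa only [efun] using h

lemma sigma4 (hθ : θ ≠ 0) :
    HasSum (fun k : ℕ => ((-1:ℝ)^(2*k+2) / (((2*k+2)+1).factorial : ℝ))
        * ((k:ℝ)*(-θ^2)^(k-1)))
      ((2*θ - 3*Real.sin θ + θ*Real.cos θ)/(2*θ^5)) := by
  have h := ((H3 hθ).mul_left (3/(2*θ^2))).sub ((H2 hθ).mul_left (1/(2*θ^2)))
  have efun : ∀ k : ℕ, (3/(2*θ^2)) * ((-1:ℝ)^k * θ^(2*k) / ((2*k+3).factorial : ℝ))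
      - (1/(2*θ^2)) * ((-1:ℝ)^k * θ^(2*k) / ((2*k+2).factorial : ℝ))
      = ((-1:ℝ)^(2*k+2) / (((2*k+2)+1).factorial : ℝ)) * ((k:ℝ)*(-θ^2)^(k-1)) := by
    intro k
    rw [factR (2*k+2), factR (2*k+1), Even.neg_one_pow (n := 2*k+2) ⟨k+1, by ring⟩]
    cases k with
    | zero => norm_num <;> ring
    | succ m =>
      rw [show m+1-1 = m from rfl, negsq]
      have := factne (2*(m+1)+1)
      push_cast
      field_simp
      ring
  have eval : (3/(2*θ^2)) * ((θ - Real.sin θ)/θ^3) - (1/(2*θ^2)) * ((1 - Real.cos θ)/θ^2)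
      = (2*θ - 3*Real.sin θ + θ*Real.cos θ)/(2*θ^5) := by
    field_simp
    ring
  rw [← eval]
  simpa only [efun] using h



noncomputable def sfun (θ : ℝ) (k : ℕ) : ℝ := (1-(k:ℝ))*(-θ^2)^k
noncomputable def tfun (θ : ℝ) (k : ℕ) : ℝ := (k:ℝ)*(-θ^2)^(k-1)

lemma sfun_succ (θ : ℝ) (m : ℕ) : sfun θ (m+1) = -(θ^2*θ^2) * tfun θ m := by
  cases m with
  | zero => simp [sfun, tfun]
  | succ n =>
    simp only [sfun, tfun, show n+1+1-1 = n+1 from rfl, show n+1-1 = n from rfl, pow_succ]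
    push_cast
    ring

lemma tfun_succ (θ : ℝ) (m : ℕ) : tfun θ (m+1) = sfun θ m - 2*θ^2 * tfun θ m := by
  cases m with
  | zero => simp [sfun, tfun]
  | succ n =>
    simp only [sfun, tfun, show n+1+1-1 = n+1 from rfl, show n+1-1 = n from rfl, pow_succ]
    push_cast
    ring

lemma pow_form {M : Type*} [AddCommGroup M] [Module ℝ M] (A : Module.End ℝ M) (η : M) (θ : ℝ)
    (hrel : A (A (A (A (A η)))) = -((2*θ^2) • (A (A (A η)))) - ((θ^2*θ^2) • (A η))) :
    ∀ k : ℕ, (A^(2*k+1)) η = sfun θ k • (A η) + tfun θ k • (A (A (A η)))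
      ∧ (A^(2*k+2)) η = sfun θ k • (A (A η)) + tfun θ k • (A (A (A (A η)))) := by
  have hrel6 : A (A (A (A (A (A η))))) =
      -((2*θ^2) • (A (A (A (A η))))) - ((θ^2*θ^2) • (A (A η))) := by
    have := congrArg A hrel
    simpa only [map_sub, map_neg, _root_.map_smul] using this
  intro k
  induction k with
  | zero =>
    constructor <;> simp [sfun, tfun, pow_succ, Module.End.mul_apply]
  | succ m ih =>
    obtain ⟨ih1, ih2⟩ := ih
    constructor
    · have e : (A^(2*(m+1)+1)) η = A (A ((A^(2*m+1)) η)) := by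
        rw [show 2*(m+1)+1 = (2*m+1)+1+1 by ring]
        simp [pow_succ', Module.End.mul_apply]
      rw [e, ih1]
      simp only [map_add, _root_.map_smul, hrel]
      rw [sfun_succ, tfun_succ]
      module
    · have e : (A^(2*(m+1)+2)) η = A (A ((A^(2*m+2)) η)) := by
        rw [show 2*(m+1)+2 = (2*m+2)+1+1 by ring]
        simp [pow_succ', Module.End.mul_apply]
      rw [e, ih2]
      simp only [map_add, _root_.map_smul, hrel6]
      rw [sfun_succ, tfun_succ]
      module


end DexpAux

open DexpAux

/-- **Proposition 4, closed form of `dexp(−ξ)` on `SE_N(3)`.** For `ξ ∈ 𝔰𝔢_N(3)` with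
rotational block `S` and `θ > 0` with `θ² = (1/2)·tr(Sᵀ S)`, the right Jacobian
`dexp(−ξ) = ∑_{i=0}^∞ ((−1)^i/(i+1)!)·ad_ξ^i` admits the closed form
`I + β₁·ad_ξ + β₂·ad_ξ² + β₃·ad_ξ³ + β₄·ad_ξ⁴` on `𝔰𝔢_N(3)`. -/
theorem dexp_closed_form_seN (N : ℕ) (ξ : Matrix (Fin (3 + N)) (Fin (3 + N)) ℝ)
    (hξ : mem_seN N ξ) (θ : ℝ) (hθ : 0 < θ)
    (hθ_sq : θ ^ 2 = (1 / 2) * Matrix.trace ((rotBlock N ξ).transpose * rotBlock N ξ)) :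
    ∀ η : Matrix (Fin (3 + N)) (Fin (3 + N)) ℝ, mem_seN N η →
      ∑' i : ℕ, ((-1 : ℝ) ^ i / (Nat.factorial (i + 1) : ℝ)) • ((adM ξ ^ i) η) =
        η + ((4 * Real.cos θ - 4 + θ * Real.sin θ) / (2 * θ ^ 2)) • (adM ξ η)
          + ((4 * θ - 5 * Real.sin θ + θ * Real.cos θ) / (2 * θ ^ 3)) • ((adM ξ ^ 2) η)
          + ((θ * Real.sin θ + 2 * Real.cos θ - 2) / (2 * θ ^ 4)) • ((adM ξ ^ 3) η)
          + ((2 * θ - 3 * Real.sin θ + θ * Real.cos θ) / (2 * θ ^ 5)) • ((adM ξ ^ 4) η)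
      := by
  intro η hη
  have hθne : θ ≠ 0 := ne_of_gt hθ
  have hkey := key5 ξ η hξ hη θ hθ_sq
  have hp1 : (adM ξ ^ 1) η = adM ξ η := by simp
  have hp2 : (adM ξ ^ 2) η = adM ξ (adM ξ η) := by
    simp [pow_succ', Module.End.mul_apply]
  have hp3 : (adM ξ ^ 3) η = adM ξ (adM ξ (adM ξ η)) := by
    simp [pow_succ', Module.End.mul_apply]
  have hp4 : (adM ξ ^ 4) η = adM ξ (adM ξ (adM ξ (adM ξ η))) := by
    simp [pow_succ', Module.End.mul_apply]
  have hp5 : (adM ξ ^ 5) η = adM ξ (adM ξ (adM ξ (adM ξ (adM ξ η)))) := by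
    simp [pow_succ', Module.End.mul_apply]
  rw [hp5, hp3] at hkey
  have hrel : adM ξ (adM ξ (adM ξ (adM ξ (adM ξ η))))
      = -((2*θ^2) • (adM ξ (adM ξ (adM ξ η)))) - ((θ^2*θ^2) • (adM ξ η)) := by
    rw [← sub_eq_zero, show adM ξ (adM ξ (adM ξ (adM ξ (adM ξ η))))
      - (-((2*θ^2) • (adM ξ (adM ξ (adM ξ η)))) - ((θ^2*θ^2) • (adM ξ η)))
      = adM ξ (adM ξ (adM ξ (adM ξ (adM ξ η))))
        + (2*θ^2) • (adM ξ (adM ξ (adM ξ η))) + (θ^2*θ^2) • (adM ξ η) from by module]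
    exact hkey
  have hform := pow_form (adM ξ) η θ hrel
  set F : ℕ → Matrix (Fin (3+N)) (Fin (3+N)) ℝ :=
    fun i => ((-1 : ℝ) ^ i / (Nat.factorial (i + 1) : ℝ)) • ((adM ξ ^ i) η) with hF
  have hOdd : HasSum (fun k => F (2*k+1))
      (((4*Real.cos θ - 4 + θ*Real.sin θ)/(2*θ^2)) • (adM ξ η)
        + ((θ*Real.sin θ + 2*Real.cos θ - 2)/(2*θ^4)) • (adM ξ (adM ξ (adM ξ η)))) := by
    have h := ((sigma1 hθne).smul_const (adM ξ η)).add
      ((sigma3 hθne).smul_const (adM ξ (adM ξ (adM ξ η))))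
    have e : ∀ k : ℕ,
        (((-1:ℝ)^(2*k+1) / (((2*k+1)+1).factorial : ℝ)) * ((1-(k:ℝ))*(-θ^2)^k)) • (adM ξ η)
        + (((-1:ℝ)^(2*k+1) / (((2*k+1)+1).factorial : ℝ)) * ((k:ℝ)*(-θ^2)^(k-1)))
            • (adM ξ (adM ξ (adM ξ η)))
        = F (2*k+1) := by
      intro k
      rw [hF]
      simp only []
      rw [(hform k).1, smul_add, smul_smul, smul_smul]
      simp [sfun, tfun]
    simpa only [e] using h
  have hEven : HasSum (fun k => F (2*k+2))
      (((4*θ - 5*Real.sin θ + θ*Real.cos θ)/(2*θ^3)) • (adM ξ (adM ξ η))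
        + ((2*θ - 3*Real.sin θ + θ*Real.cos θ)/(2*θ^5))
            • (adM ξ (adM ξ (adM ξ (adM ξ η))))) := by
    have h := ((sigma2 hθne).smul_const (adM ξ (adM ξ η))).add
      ((sigma4 hθne).smul_const (adM ξ (adM ξ (adM ξ (adM ξ η)))))
    have e : ∀ k : ℕ,
        (((-1:ℝ)^(2*k+2) / (((2*k+2)+1).factorial : ℝ)) * ((1-(k:ℝ))*(-θ^2)^k))
            • (adM ξ (adM ξ η))
        + (((-1:ℝ)^(2*k+2) / (((2*k+2)+1).factorial : ℝ)) * ((k:ℝ)*(-θ^2)^(k-1)))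
            • (adM ξ (adM ξ (adM ξ (adM ξ η))))
        = F (2*k+2) := by
      intro k
      rw [hF]
      simp only []
      rw [(hform k).2, smul_add, smul_smul, smul_smul]
      simp [sfun, tfun]
    simpa only [e] using h
  have hShift : HasSum (fun i => F (i+1))
      ((((4*Real.cos θ - 4 + θ*Real.sin θ)/(2*θ^2)) • (adM ξ η)
        + ((θ*Real.sin θ + 2*Real.cos θ - 2)/(2*θ^4)) • (adM ξ (adM ξ (adM ξ η))))
       + (((4*θ - 5*Real.sin θ + θ*Real.cos θ)/(2*θ^3)) • (adM ξ (adM ξ η))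
        + ((2*θ - 3*Real.sin θ + θ*Real.cos θ)/(2*θ^5))
            • (adM ξ (adM ξ (adM ξ (adM ξ η)))))) :=
    HasSum.even_add_odd hOdd hEven
  have htot := (hasSum_nat_add_iff 1).mp hShift
  have hF0 : ∑ i ∈ Finset.range 1, F i = η := by
    simp [hF]
  rw [hF0] at htot
  rw [htot.tsum_eq, hp2, hp3, hp4]
  module
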